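/- arXiv:2502.06399 — 2 statements merged into one kernel-verified Lean document; each statement's English description precedes it below -/
import Mathlib

section
/- Let α ∈ (1, ∞), let A_1, …, A_n be density matrices in ℂ^{d×d} with ∑_{j=1}^n A_j positive definite, let w[1], …, w[n] > 0 with ∑_{j=1}^n w[j] = 1, set F(Q) := ∑_{j=1}^n w[j] D_α(A_j ‖ Q), and define T_F(U) := ( ∑_{j=1}^n w[j] · A_j^α / Tr[A_j^α U] )^{(1−α)/α} for positive definite Hermitian U. Then for any positive definite Hermitian Q ∈ ℂ^{d×d} with Tr[Q] ≤ 1, F( T_F(Q^{1−α})^{1/(1−α)} ) ≤ F(Q), with equality if and only if Q^{1−α} is a fixed point of T_F. -/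
open scoped ComplexOrder
open Matrix

noncomputable section

/-- Real power of a matrix via the functional calculus (spectral decomposition);
junk value `A` if `A` is not Hermitian. -/
noncomputable def mpow {d : ℕ} (A : Matrix (Fin d) (Fin d) ℂ) (r : ℝ) :
    Matrix (Fin d) (Fin d) ℂ :=
  if hA : A.IsHermitian then
    (hA.eigenvectorUnitary : Matrix (Fin d) (Fin d) ℂ) *
      Matrix.diagonal (fun i => ((hA.eigenvalues i ^ r : ℝ) : ℂ)) *
      star (hA.eigenvectorUnitary : Matrix (Fin d) (Fin d) ℂ)
  else A

/-- The Loewner order: `A ⪯ B` iff `B - A` is positive semidefinite. -/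
def loewnerLE {d : ℕ} (A B : Matrix (Fin d) (Fin d) ℂ) : Prop := (B - A).PosSemidef

/-- Thompson metric on positive definite matrices (extended-real valued):
`inf { r ≥ 0 | exp (-r) • V ⪯ U ⪯ exp r • V }`, equal to `⊤` if no such `r` exists. -/
noncomputable def dTmat {d : ℕ} (V U : Matrix (Fin d) (Fin d) ℂ) : EReal :=
  sInf {x : EReal | ∃ r : ℝ, 0 ≤ r ∧ x = (r : EReal) ∧
    loewnerLE (Real.exp (-r) • V) U ∧ loewnerLE U (Real.exp r • V)}

open Classical in
/-- Thompson metric on entrywise-positive vectors (extended-real valued):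
`max_i |log (v i / u i)|`. -/
noncomputable def dTvec {d : ℕ} (v u : Fin d → ℝ) : EReal :=
  (⨆ i, if 0 < v i ∧ 0 < u i then ((|Real.log (v i / u i)| : ℝ) : EReal) else (⊤ : EReal)) ⊔ 0

/-- A density matrix: Hermitian positive semidefinite with unit trace. -/
def IsDensityMatrix {d : ℕ} (A : Matrix (Fin d) (Fin d) ℂ) : Prop :=
  A.PosSemidef ∧ A.trace = 1

/-- The operator `T_F (U) = (∑ j, w j • A j ^ α / Tr[A j ^ α * U]) ^ ((1 - α)/α)`. -/
noncomputable def TF {n d : ℕ} (w : Fin n → ℝ) (A : Fin n → Matrix (Fin d) (Fin d) ℂ)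
    (α : ℝ) (U : Matrix (Fin d) (Fin d) ℂ) : Matrix (Fin d) (Fin d) ℂ :=
  mpow (∑ j, ((w j : ℂ) / Matrix.trace (mpow (A j) α * U)) • mpow (A j) α) ((1 - α) / α)

/-- The Petz–Rényi divergence of order `α` (real-valued version, intended for
positive definite `Q`): `(α - 1)⁻¹ * log Tr[A^α * Q^(1-α)]`. -/
noncomputable def petzRenyi {d : ℕ} (α : ℝ) (A Q : Matrix (Fin d) (Fin d) ℂ) : ℝ :=
  (α - 1)⁻¹ * Real.log (Matrix.trace (mpow A α * mpow Q (1 - α))).re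

open Classical in
/-- The Petz–Rényi divergence of order `α`, extended-real valued; `⊤` whenever the
defining formula is not well-defined. -/
noncomputable def petzRenyiE {d : ℕ} (α : ℝ) (A Q : Matrix (Fin d) (Fin d) ℂ) : EReal :=
  if 0 < (Matrix.trace (mpow A α * mpow Q (1 - α))).re ∧
      (1 < α → ∀ x : Fin d → ℂ, Q.mulVec x = 0 → A.mulVec x = 0) then
    (((α - 1)⁻¹ * Real.log (Matrix.trace (mpow A α * mpow Q (1 - α))).re : ℝ) : EReal)
  else ⊤

/-- The objective `F(Q) = ∑ j, w j * D_α(A j ‖ Q)`, extended-real valued. -/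
noncomputable def FE {n d : ℕ} (w : Fin n → ℝ) (A : Fin n → Matrix (Fin d) (Fin d) ℂ)
    (α : ℝ) (Q : Matrix (Fin d) (Fin d) ℂ) : EReal :=
  ∑ j, ((w j : ℝ) : EReal) * petzRenyiE α (A j) Q

/-- Membership in the probability simplex `Δ_d`. -/
def memSimplex {d : ℕ} (q : Fin d → ℝ) : Prop := (∀ i, 0 ≤ q i) ∧ ∑ i, q i = 1

/-- The classical operator `T_f (u) = (∑ j, w j • a j ^ α / ⟨a j ^ α, u⟩) ^ ((1 - α)/α)`,
entrywise. -/
noncomputable def Tf {n d : ℕ} (w : Fin n → ℝ) (a : Fin n → Fin d → ℝ) (α : ℝ)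
    (u : Fin d → ℝ) : Fin d → ℝ :=
  fun i => (∑ j, w j * (a j i ^ α) / (∑ k, (a j k ^ α) * u k)) ^ ((1 - α) / α)

open Classical in
/-- The classical Rényi divergence term, extended-real valued; `⊤` whenever the
defining formula is not well-defined. -/
noncomputable def petzVecE {d : ℕ} (α : ℝ) (a q : Fin d → ℝ) : EReal :=
  if 0 < (∑ i, a i ^ α * q i ^ (1 - α)) ∧ (1 < α → ∀ i, q i = 0 → a i = 0) then
    (((α - 1)⁻¹ * Real.log (∑ i, a i ^ α * q i ^ (1 - α)) : ℝ) : EReal)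
  else ⊤

/-- The classical objective `f(q) = ∑ j, w j * (α-1)⁻¹ * log (∑ i, (a j i)^α * (q i)^(1-α))`,
real-valued version (intended for entrywise positive `q`). -/
noncomputable def fcl {n d : ℕ} (w : Fin n → ℝ) (a : Fin n → Fin d → ℝ) (α : ℝ)
    (q : Fin d → ℝ) : ℝ :=
  ∑ j, w j * ((α - 1)⁻¹ * Real.log (∑ i, a j i ^ α * q i ^ (1 - α)))

/-- Total CES demand in a Fisher market at prices `p`. -/
noncomputable def demand {n d : ℕ} (w : Fin n → ℝ) (a : Fin n → Fin d → ℝ)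
    (ρ : Fin n → ℝ) (p : Fin d → ℝ) : Fin d → ℝ :=
  fun i => ∑ j, w j * (a j i ^ (1 / (1 - ρ j)) * p i ^ (-(1 / (1 - ρ j)))) /
    (∑ k, a j k ^ (1 / (1 - ρ j)) * p k ^ (-(ρ j / (1 - ρ j))))

section Helpers
variable {d : ℕ}




lemma diag_star_real (a : Fin d → ℝ) :
    (Matrix.diagonal (fun i => ((a i : ℝ) : ℂ))).conjTranspose
      = Matrix.diagonal (fun i => ((a i : ℝ) : ℂ)) := by
  rw [Matrix.diagonal_conjTranspose]
  ext i j
  by_cases h : i = j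
  · subst h; simp [Matrix.diagonal_apply_eq, Pi.star_apply, Complex.conj_ofReal]
  · simp [Matrix.diagonal_apply_ne _ h]

lemma conj_diag_isHermitian (U : Matrix (Fin d) (Fin d) ℂ) (a : Fin d → ℝ) :
    (U * Matrix.diagonal (fun i => ((a i : ℝ) : ℂ)) * star U).IsHermitian := by
  unfold Matrix.IsHermitian
  simp only [Matrix.star_eq_conjTranspose, Matrix.conjTranspose_mul,
    Matrix.conjTranspose_conjTranspose, diag_star_real]
  rw [Matrix.mul_assoc]

lemma conj_diag_ext {U V : Matrix (Fin d) (Fin d) ℂ}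
    (hU : U * star U = 1) (hV : V * star V = 1) {a b : Fin d → ℝ}
    (h : U * Matrix.diagonal (fun i => ((a i : ℝ) : ℂ)) * star U
       = V * Matrix.diagonal (fun i => ((b i : ℝ) : ℂ)) * star V) (f : ℝ → ℝ) :
    U * Matrix.diagonal (fun i => ((f (a i) : ℝ) : ℂ)) * star U
      = V * Matrix.diagonal (fun i => ((f (b i) : ℝ) : ℂ)) * star V := by
  have hU' : star U * U = 1 := mul_eq_one_comm.mp hU
  have hV' : star V * V = 1 := mul_eq_one_comm.mp hV
  have hcV : ∀ X : Matrix (Fin d) (Fin d) ℂ, X * star V * V = X := fun X => by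
    rw [Matrix.mul_assoc, hV', Matrix.mul_one]
  have hcV2 : ∀ X : Matrix (Fin d) (Fin d) ℂ, X * V * star V = X := fun X => by
    rw [Matrix.mul_assoc, hV, Matrix.mul_one]
  have h2 := congrArg (fun M => star U * M * V) h
  simp only [← Matrix.mul_assoc] at h2
  rw [hU', one_mul, hcV, Matrix.mul_assoc] at h2
  -- h2 : D_a * (star U * V) = star U * V * D_b
  have entry : ∀ i k, (star U * V) i k ≠ 0 → a i = b k := by
    intro i k hWik
    have h3 := congrFun (congrFun h2 i) k
    simp only [Matrix.diagonal_mul, Matrix.mul_diagonal] at h3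
    have h4 : ((a i : ℝ) : ℂ) = ((b k : ℝ) : ℂ) :=
      mul_right_cancel₀ hWik (by rw [h3, mul_comm])
    exact_mod_cast h4
  have key2 : Matrix.diagonal (fun i => ((f (a i) : ℝ) : ℂ)) * (star U * V)
      = star U * V * Matrix.diagonal (fun i => ((f (b i) : ℝ) : ℂ)) := by
    ext i k
    simp only [Matrix.diagonal_mul, Matrix.mul_diagonal]
    by_cases hWik : (star U * V) i k = 0
    · simp [hWik]
    · rw [entry i k hWik]; ring
  have h5 := congrArg (fun M => U * M * star V) key2
  simp only [← Matrix.mul_assoc] at h5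
  rw [hU, one_mul, hcV2] at h5
  exact h5

lemma mpow_conj {U : Matrix (Fin d) (Fin d) ℂ} (hU : U * star U = 1)
    (a : Fin d → ℝ) (r : ℝ) :
    mpow (U * Matrix.diagonal (fun i => ((a i : ℝ) : ℂ)) * star U) r
      = U * Matrix.diagonal (fun i => ((a i ^ r : ℝ) : ℂ)) * star U := by
  have hBh : (U * Matrix.diagonal (fun i => ((a i : ℝ) : ℂ)) * star U).IsHermitian :=
    conj_diag_isHermitian U a
  rw [mpow, dif_pos hBh]
  have hspec : (hBh.eigenvectorUnitary : Matrix (Fin d) (Fin d) ℂ) *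
      Matrix.diagonal (fun i => ((hBh.eigenvalues i : ℝ) : ℂ)) *
      star (hBh.eigenvectorUnitary : Matrix (Fin d) (Fin d) ℂ)
      = U * Matrix.diagonal (fun i => ((a i : ℝ) : ℂ)) * star U := by
    conv_rhs => rw [hBh.spectral_theorem]
    rfl
  have hUe : (hBh.eigenvectorUnitary : Matrix (Fin d) (Fin d) ℂ) *
      star (hBh.eigenvectorUnitary : Matrix (Fin d) (Fin d) ℂ) = 1 :=
    Matrix.mem_unitaryGroup_iff.mp hBh.eigenvectorUnitary.2
  exact conj_diag_ext hUe hU hspec (fun x => x ^ r)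


lemma mul_conj_norm (z : ℂ) : z * (starRingEnd ℂ) z = ((‖z‖ ^ 2 : ℝ) : ℂ) := by
  rw [Complex.mul_conj]
  norm_cast
  rw [Complex.sq_norm]

lemma trace_conj_diag {U : Matrix (Fin d) (Fin d) ℂ} (hU : U * star U = 1) (a : Fin d → ℝ) :
    (U * Matrix.diagonal (fun i => ((a i : ℝ) : ℂ)) * star U).trace = ((∑ i, a i : ℝ) : ℂ) := by
  have hU' : star U * U = 1 := mul_eq_one_comm.mp hU
  rw [Matrix.trace_mul_cycle, hU', one_mul, Matrix.trace_diagonal]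
  push_cast
  rfl

lemma trace_conj_diag_mul {U V : Matrix (Fin d) (Fin d) ℂ}
    (hU : U * star U = 1) (hV : V * star V = 1) (a b : Fin d → ℝ) :
    ((U * Matrix.diagonal (fun i => ((a i : ℝ) : ℂ)) * star U) *
     (V * Matrix.diagonal (fun i => ((b i : ℝ) : ℂ)) * star V)).trace
      = ((∑ i, ∑ k, a i * b k * ‖(star U * V) i k‖ ^ 2 : ℝ) : ℂ) := by
  have hU' : star U * U = 1 := mul_eq_one_comm.mp hU
  have key : (U * Matrix.diagonal (fun i => ((a i : ℝ) : ℂ)) * star U) *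
     (V * Matrix.diagonal (fun i => ((b i : ℝ) : ℂ)) * star V)
      = U * (Matrix.diagonal (fun i => ((a i : ℝ) : ℂ)) * (star U * V) *
          Matrix.diagonal (fun i => ((b i : ℝ) : ℂ)) * star (star U * V)) * star U := by
    simp only [Matrix.star_mul, star_star, Matrix.mul_assoc]
    rw [hU, Matrix.mul_one]
  rw [key, Matrix.trace_mul_cycle, ← Matrix.mul_assoc, hU', one_mul]
  rw [Matrix.trace]
  push_cast
  refine Finset.sum_congr rfl (fun i _ => ?_)
  show (Matrix.diagonal (fun i => ((a i : ℝ) : ℂ)) * (star U * V) *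
        Matrix.diagonal (fun i => ((b i : ℝ) : ℂ)) * star (star U * V)) i i
      = ∑ k, ((a i : ℂ) * (b k : ℂ) * (‖(star U * V) i k‖ : ℂ) ^ 2)
  rw [Matrix.mul_apply]
  refine Finset.sum_congr rfl (fun k _ => ?_)
  simp only [Matrix.diagonal_mul, Matrix.mul_diagonal, Matrix.star_apply]
  have h5 : (star U * V) i k * star ((star U * V) i k)
      = ((‖(star U * V) i k‖ ^ 2 : ℝ) : ℂ) := mul_conj_norm _
  push_cast at h5
  calc (a i : ℂ) * (star U * V) i k * (b k : ℂ) * star ((star U * V) i k)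
      = (a i : ℂ) * (b k : ℂ) * ((star U * V) i k * star ((star U * V) i k)) := by ring
    _ = (a i : ℂ) * (b k : ℂ) * (‖(star U * V) i k‖ : ℂ) ^ 2 := by rw [h5]

lemma row_sum_norm {W : Matrix (Fin d) (Fin d) ℂ} (hW : W * star W = 1) (i : Fin d) :
    ∑ k, ‖W i k‖ ^ 2 = 1 := by
  have h := congrFun (congrFun hW i) i
  rw [Matrix.mul_apply] at h
  simp only [Matrix.one_apply_eq] at h
  have : ∑ k, ((‖W i k‖ ^ 2 : ℝ) : ℂ) = 1 := by
    rw [← h]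
    refine Finset.sum_congr rfl (fun k _ => ?_)
    rw [Matrix.star_apply]
    exact (mul_conj_norm _).symm
  exact_mod_cast this

lemma col_sum_norm {W : Matrix (Fin d) (Fin d) ℂ} (hW : star W * W = 1) (k : Fin d) :
    ∑ i, ‖W i k‖ ^ 2 = 1 := by
  have h := congrFun (congrFun hW k) k
  rw [Matrix.mul_apply] at h
  simp only [Matrix.one_apply_eq] at h
  have : ∑ i, ((‖W i k‖ ^ 2 : ℝ) : ℂ) = 1 := by
    rw [← h]
    refine Finset.sum_congr rfl (fun i _ => ?_)
    rw [Matrix.star_apply]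
    rw [mul_comm]
    exact (mul_conj_norm _).symm
  exact_mod_cast this

lemma quad_conj_diag {U : Matrix (Fin d) (Fin d) ℂ} (a : Fin d → ℝ) (x : Fin d → ℂ) :
    dotProduct (star x) ((U * Matrix.diagonal (fun i => ((a i : ℝ) : ℂ)) * star U) *ᵥ x)
      = ((∑ i, a i * ‖(star U *ᵥ x) i‖ ^ 2 : ℝ) : ℂ) := by
  rw [← Matrix.mulVec_mulVec, ← Matrix.mulVec_mulVec]
  rw [Matrix.dotProduct_mulVec (star x) U]
  have hvm : Matrix.vecMul (star x) U = star (star U *ᵥ x) := by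
    rw [Matrix.star_mulVec, Matrix.star_eq_conjTranspose, Matrix.conjTranspose_conjTranspose]
  rw [hvm]
  set y := star U *ᵥ x with hy
  rw [Matrix.dotProduct_mulVec, dotProduct]
  push_cast
  refine Finset.sum_congr rfl (fun i _ => ?_)
  have hvd : (star y ᵥ* Matrix.diagonal fun i => ((a i : ℝ) : ℂ)) i = star (y i) * (a i : ℂ) := by
    rw [Matrix.vecMul_diagonal]; rfl
  rw [hvd]
  have h5 : y i * star (y i) = ((‖y i‖ ^ 2 : ℝ) : ℂ) := mul_conj_norm _
  push_cast at h5
  calc star (y i) * (a i : ℂ) * y i = (a i : ℂ) * (y i * star (y i)) := by ring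
    _ = (a i : ℂ) * (‖y i‖ : ℂ) ^ 2 := by rw [h5]


lemma youngGeomLt {θ a b : ℝ} (hθ : 0 < θ) (hθ1 : θ < 1) (ha : 0 < a) (hb : 0 < b) (hne : a ≠ b) :
    a ^ θ * b ^ (1 - θ) < θ * a + (1 - θ) * b := by
  have hlog : Real.log a ≠ Real.log b := by
    intro h
    exact hne (by rw [← Real.exp_log ha, ← Real.exp_log hb, h])
  have h := strictConvexOn_exp.2 (Set.mem_univ (Real.log a)) (Set.mem_univ (Real.log b))
    hlog hθ (show (0:ℝ) < 1 - θ by linarith) (show θ + (1 - θ) = 1 by ring)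
  simp only [smul_eq_mul, Real.exp_log ha, Real.exp_log hb] at h
  calc a ^ θ * b ^ (1 - θ)
      = Real.exp (θ * Real.log a + (1 - θ) * Real.log b) := by
        rw [Real.exp_add, Real.rpow_def_of_pos ha, Real.rpow_def_of_pos hb,
          mul_comm (Real.log a) θ, mul_comm (Real.log b) (1 - θ)]
    _ < θ * a + (1 - θ) * b := h

lemma young {α : ℝ} (hα : 1 < α) {x y : ℝ} (hx : 0 ≤ x) (hy : 0 < y) :
    x ^ (1/α) ≤ (1/α) * (x * y ^ (1-α)) + (1 - 1/α) * y ∧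
    ((1/α) * (x * y ^ (1-α)) + (1 - 1/α) * y = x ^ (1/α) → y = x ^ (1/α)) := by
  have hα0 : 0 < α := by linarith
  have hθ : 0 < 1/α := by positivity
  have hθ1 : 1/α < 1 := by rw [div_lt_one hα0]; linarith
  have h1θ : 0 < 1 - 1/α := by linarith
  rcases eq_or_lt_of_le hx with h0 | hxpos
  · have hx0 : x = 0 := h0.symm
    subst hx0
    have hx1 : (0:ℝ) ^ (1/α) = 0 := Real.zero_rpow (ne_of_gt hθ)
    rw [hx1]
    constructor
    · have : 0 < (1/α) * (0 * y ^ (1-α)) + (1 - 1/α) * y := by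
        rw [zero_mul, mul_zero, zero_add]
        positivity
      linarith
    · intro h
      exfalso
      rw [zero_mul, mul_zero, zero_add] at h
      nlinarith
  · have hyp : 0 < y ^ (1-α) := Real.rpow_pos_of_pos hy _
    have ha : 0 < x * y ^ (1-α) := mul_pos hxpos hyp
    have keyid : (x * y ^ (1-α)) ^ (1/α) * y ^ (1 - 1/α) = x ^ (1/α) := by
      rw [Real.mul_rpow hxpos.le hyp.le, ← Real.rpow_mul hy.le]
      rw [mul_assoc, ← Real.rpow_add hy]
      have : (1-α) * (1/α) + (1 - 1/α) = 0 := by field_simp; ring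
      rw [this, Real.rpow_zero, mul_one]
    constructor
    · have := Real.geom_mean_le_arith_mean2_weighted hθ.le h1θ.le ha.le hy.le (by ring)
      rw [keyid] at this
      linarith [this]
    · intro h
      by_cases hne : x * y ^ (1-α) = y
      · -- x = y ^ α, so y = x ^ (1/α)
        have hxy : x = y ^ α := by
          have h2 : x * y ^ (1-α) * y ^ (α-1) = y * y ^ (α-1) := by rw [hne]
          have h3 : (1-α) + (α-1) = (0:ℝ) := by ring
          rw [mul_assoc, ← Real.rpow_add hy, h3, Real.rpow_zero, mul_one] at h2
          have h4 : y * y ^ (α-1) = y ^ α := by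
            nth_rewrite 1 [← Real.rpow_one y]
            rw [← Real.rpow_add hy]; norm_num
          rw [h2, h4]
        rw [hxy, ← Real.rpow_mul hy.le, mul_one_div_cancel (ne_of_gt hα0), Real.rpow_one]
      · exfalso
        have := youngGeomLt hθ hθ1 ha hy hne
        rw [keyid] at this
        linarith

lemma conj_of_diag_comm {d : ℕ} {U V : Matrix (Fin d) (Fin d) ℂ}
    (hU : U * star U = 1) (hV : V * star V = 1) {f g : Fin d → ℝ}
    (h : Matrix.diagonal (fun i => ((f i : ℝ) : ℂ)) * (star U * V)
       = (star U * V) * Matrix.diagonal (fun i => ((g i : ℝ) : ℂ))) :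
    U * Matrix.diagonal (fun i => ((f i : ℝ) : ℂ)) * star U
      = V * Matrix.diagonal (fun i => ((g i : ℝ) : ℂ)) * star V := by
  have hV' : star V * V = 1 := mul_eq_one_comm.mp hV
  have hcV2 : ∀ X : Matrix (Fin d) (Fin d) ℂ, X * V * star V = X := fun X => by
    rw [Matrix.mul_assoc, hV, Matrix.mul_one]
  have h5 := congrArg (fun M => U * M * star V) h
  simp only [← Matrix.mul_assoc] at h5
  rw [hU, one_mul, hcV2] at h5
  exact h5

lemma unitary_comb {d : ℕ} {U V : Matrix (Fin d) (Fin d) ℂ}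
    (hU : U * star U = 1) (hV : V * star V = 1) :
    (star U * V) * star (star U * V) = 1 ∧ star (star U * V) * (star U * V) = 1 := by
  constructor
  · rw [Matrix.star_mul, star_star, Matrix.mul_assoc, ← Matrix.mul_assoc V, hV, one_mul]
    exact mul_eq_one_comm.mp hU
  · rw [Matrix.star_mul, star_star, Matrix.mul_assoc, ← Matrix.mul_assoc U, hU, one_mul]
    exact mul_eq_one_comm.mp hV

lemma exists_pos_of_sum_pos' {m : ℕ} {f : Fin m → ℝ} (h : 0 < ∑ i, f i) : ∃ i, 0 < f i := by
  by_contra hc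
  push_neg at hc
  have : ∑ i, f i ≤ 0 := Finset.sum_nonpos (fun i _ => hc i)
  linarith

lemma sum2_pos {m k : ℕ} {f : Fin m → Fin k → ℝ} (hnn : ∀ i j, 0 ≤ f i j)
    (hex : ∃ i j, 0 < f i j) : 0 < ∑ i, ∑ j, f i j := by
  obtain ⟨i0, j0, hij⟩ := hex
  refine Finset.sum_pos' (fun i _ => Finset.sum_nonneg (fun j _ => hnn i j)) ⟨i0, Finset.mem_univ _, ?_⟩
  exact Finset.sum_pos' (fun j _ => hnn i0 j) ⟨j0, Finset.mem_univ _, hij⟩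

lemma sum2_eq_zero {m k : ℕ} {f : Fin m → Fin k → ℝ} (hnn : ∀ i j, 0 ≤ f i j)
    (h : ∑ i, ∑ j, f i j ≤ 0) : ∀ i j, f i j = 0 := by
  have h0 : ∑ i, ∑ j, f i j = 0 :=
    le_antisymm h (Finset.sum_nonneg (fun i _ => Finset.sum_nonneg (fun j _ => hnn i j)))
  intro i j
  have hi : ∑ j, f i j = 0 := by
    have := (Finset.sum_eq_zero_iff_of_nonneg
      (fun i _ => Finset.sum_nonneg (fun j _ => hnn i j))).mp h0
    exact this i (Finset.mem_univ _)
  exact (Finset.sum_eq_zero_iff_of_nonneg (fun j _ => hnn i j)).mp hi j (Finset.mem_univ _)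

lemma isHermitian_sum_smul {n d : ℕ} (r : Fin n → ℝ) (M : Fin n → Matrix (Fin d) (Fin d) ℂ)
    (hM : ∀ j, (M j).IsHermitian) : (∑ j, ((r j : ℝ) : ℂ) • M j).IsHermitian := by
  unfold Matrix.IsHermitian
  rw [Matrix.conjTranspose_sum]
  refine Finset.sum_congr rfl (fun j _ => ?_)
  rw [Matrix.conjTranspose_smul, hM j]
  congr 1
  exact Complex.conj_ofReal _

lemma sum_mulVec' {n d : ℕ} (M : Fin n → Matrix (Fin d) (Fin d) ℂ) (x : Fin d → ℂ) :
    (∑ j, M j) *ᵥ x = ∑ j, (M j) *ᵥ x := by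
  ext i
  rw [Finset.sum_apply]
  show dotProduct ((∑ j, M j) i) x = ∑ j, dotProduct ((M j) i) x
  unfold dotProduct
  rw [Finset.sum_comm]
  refine Finset.sum_congr rfl (fun k _ => ?_)
  rw [← Finset.sum_mul, Matrix.sum_apply]

lemma dotProduct_sum' {n d : ℕ} (x : Fin d → ℂ) (v : Fin n → Fin d → ℂ) :
    dotProduct x (∑ j, v j) = ∑ j, dotProduct x (v j) := by
  unfold dotProduct
  rw [Finset.sum_comm]
  refine Finset.sum_congr rfl (fun k _ => ?_)
  rw [Finset.sum_apply, Finset.mul_sum]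

end Helpers

/-- for `α > 1` and positive definite `Q` with `Tr[Q] ≤ 1`, the function
value is non-increasing along the iteration: `F(T_F(Q^(1-α))^(1/(1-α))) ≤ F(Q)`, with
equality iff `Q^(1-α)` is a fixed point of `T_F`. -/
theorem TF_fval_decrease {n d : ℕ} (α : ℝ) (hα : 1 < α)
    (A : Fin n → Matrix (Fin d) (Fin d) ℂ) (hA : ∀ j, IsDensityMatrix (A j))
    (hApos : (∑ j, A j).PosDef)
    (w : Fin n → ℝ) (hw : ∀ j, 0 < w j) (hw1 : ∑ j, w j = 1)
    (Q : Matrix (Fin d) (Fin d) ℂ) (hQ : Q.PosDef) (hTr : Q.trace ≤ 1) :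
    (∑ j, w j * petzRenyi α (A j) (mpow (TF w A α (mpow Q (1 - α))) (1 / (1 - α)))) ≤
        (∑ j, w j * petzRenyi α (A j) Q) ∧
      ((∑ j, w j * petzRenyi α (A j) (mpow (TF w A α (mpow Q (1 - α))) (1 / (1 - α)))) =
          (∑ j, w j * petzRenyi α (A j) Q) ↔
        TF w A α (mpow Q (1 - α)) = mpow Q (1 - α)) := by
  -- trivial case d = 0
  rcases Nat.eq_zero_or_pos d with hd | hd
  · subst hd
    have hQQ : ∀ M N : Matrix (Fin 0) (Fin 0) ℂ, M = N := fun M N => by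
      ext i j; exact i.elim0
    rw [hQQ (mpow (TF w A α (mpow Q (1 - α))) (1 / (1 - α))) Q]
    exact ⟨le_refl _, ⟨fun _ => hQQ _ _, fun _ => rfl⟩⟩
  -- arithmetic facts about α
  have hα0 : (0:ℝ) < α := by linarith
  have hαne : α ≠ 0 := ne_of_gt hα0
  have hαm1 : (0:ℝ) < α - 1 := by linarith
  have h1mα : (1:ℝ) - α ≠ 0 := ne_of_lt (by linarith : (1:ℝ) - α < 0)
  have hθ : (0:ℝ) < 1/α := by positivity
  have h1θ : (0:ℝ) < 1 - 1/α := by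
    rw [sub_pos, div_lt_one hα0]; exact hα
  -- Q eigen-data
  have hQh : Q.IsHermitian := hQ.1
  set Vq : Matrix (Fin d) (Fin d) ℂ := (hQh.eigenvectorUnitary : Matrix (Fin d) (Fin d) ℂ) with hVqdef
  set q : Fin d → ℝ := hQh.eigenvalues with hqdef
  have hVq : Vq * star Vq = 1 := Matrix.mem_unitaryGroup_iff.mp hQh.eigenvectorUnitary.2
  have hqpos : ∀ k, 0 < q k := fun k => hQ.eigenvalues_pos k
  have hQspec : Q = Vq * Matrix.diagonal (fun i => ((q i : ℝ) : ℂ)) * star Vq := by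
    conv_lhs => rw [hQh.spectral_theorem]
    rfl
  -- A eigen-data
  set Ua : Fin n → Matrix (Fin d) (Fin d) ℂ :=
    fun j => ((hA j).1.1.eigenvectorUnitary : Matrix (Fin d) (Fin d) ℂ) with hUadef
  set a : Fin n → Fin d → ℝ := fun j => (hA j).1.1.eigenvalues with hadef
  have hUa : ∀ j, Ua j * star (Ua j) = 1 :=
    fun j => Matrix.mem_unitaryGroup_iff.mp (hA j).1.1.eigenvectorUnitary.2
  have haspec : ∀ j, A j = Ua j * Matrix.diagonal (fun i => ((a j i : ℝ) : ℂ)) * star (Ua j) := by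
    intro j
    conv_lhs => rw [(hA j).1.1.spectral_theorem]
    rfl
  have hann : ∀ j i, 0 ≤ a j i := fun j i => (hA j).1.eigenvalues_nonneg i
  have hasum : ∀ j, ∑ i, a j i = 1 := by
    intro j
    have h1 : (A j).trace = ((∑ i, a j i : ℝ) : ℂ) := by
      conv_lhs => rw [haspec j]
      exact trace_conj_diag (hUa j) (a j)
    rw [(hA j).2] at h1
    exact_mod_cast h1.symm
  have haex : ∀ j, ∃ i, 0 < a j i := by
    intro j
    by_contra hc
    push_neg at hc
    have : ∑ i, a j i = 0 :=
      Finset.sum_eq_zero (fun i _ => le_antisymm (hc i) (hann j i))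
    rw [hasum j] at this
    exact one_ne_zero this
  -- mpow computations
  have hPj : ∀ j, mpow (A j) α
      = Ua j * Matrix.diagonal (fun i => ((a j i ^ α : ℝ) : ℂ)) * star (Ua j) := by
    intro j
    conv_lhs => rw [haspec j]
    exact mpow_conj (hUa j) (a j) α
  have hB : mpow Q (1 - α)
      = Vq * Matrix.diagonal (fun i => ((q i ^ (1-α) : ℝ) : ℂ)) * star Vq := by
    conv_lhs => rw [hQspec]
    exact mpow_conj hVq q (1-α)
  -- the constants c j
  set c : Fin n → ℝ :=
    fun j => ∑ i, ∑ k, (a j i ^ α) * (q k ^ (1-α)) * ‖(star (Ua j) * Vq) i k‖^2 with hcdef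
  have hcj : ∀ j, (mpow (A j) α * mpow Q (1-α)).trace = ((c j : ℝ) : ℂ) := by
    intro j
    rw [hPj j, hB]
    exact trace_conj_diag_mul (hUa j) hVq _ _
  have hcpos : ∀ j, 0 < c j := by
    intro j
    obtain ⟨i0, hi0⟩ := haex j
    have hrow : ∑ k, ‖(star (Ua j) * Vq) i0 k‖^2 = 1 :=
      row_sum_norm (unitary_comb (hUa j) hVq).1 i0
    obtain ⟨k0, hk0⟩ := exists_pos_of_sum_pos' (by rw [hrow]; norm_num)
    refine sum2_pos (fun i k => mul_nonneg (mul_nonneg (Real.rpow_nonneg (hann j i) _)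
      (Real.rpow_nonneg (hqpos k).le _)) (sq_nonneg _)) ⟨i0, k0, ?_⟩
    have h1 : 0 < a j i0 ^ α := Real.rpow_pos_of_pos hi0 α
    have h2 : 0 < q k0 ^ (1-α) := Real.rpow_pos_of_pos (hqpos k0) _
    positivity
  -- the matrix S
  set S : Matrix (Fin d) (Fin d) ℂ := ∑ j, ((w j / c j : ℝ) : ℂ) • mpow (A j) α with hSdef
  have hTFeq : TF w A α (mpow Q (1-α)) = mpow S ((1-α)/α) := by
    have hsame : (∑ j, ((w j : ℂ) / Matrix.trace (mpow (A j) α * mpow Q (1-α))) • mpow (A j) α)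
        = S := by
      rw [hSdef]
      refine Finset.sum_congr rfl (fun j _ => ?_)
      rw [hcj j, Complex.ofReal_div]
    unfold TF
    rw [hsame]
  have hSh : S.IsHermitian := by
    rw [hSdef]
    exact isHermitian_sum_smul _ _ (fun j => by rw [hPj j]; exact conj_diag_isHermitian _ _)
  -- S is positive definite
  have hSpd : S.PosDef := by
    refine Matrix.PosDef.of_dotProduct_mulVec_pos hSh (fun x hx => ?_)
    have quadA : ∀ j, dotProduct (star x) (A j *ᵥ x)
        = ((∑ i, a j i * ‖(star (Ua j) *ᵥ x) i‖^2 : ℝ) : ℂ) := by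
      intro j
      conv_lhs => rw [haspec j]
      exact quad_conj_diag (a j) x
    have quadP : ∀ j, dotProduct (star x) (mpow (A j) α *ᵥ x)
        = ((∑ i, a j i ^ α * ‖(star (Ua j) *ᵥ x) i‖^2 : ℝ) : ℂ) := by
      intro j
      rw [hPj j]
      exact quad_conj_diag _ x
    have hpos := hApos.dotProduct_mulVec_pos hx
    rw [sum_mulVec' A x, dotProduct_sum' (star x)] at hpos
    rw [Finset.sum_congr rfl (fun j _ => quadA j)] at hpos
    rw [show (∑ j, ((∑ i, a j i * ‖(star (Ua j) *ᵥ x) i‖^2 : ℝ) : ℂ))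
        = ((∑ j, ∑ i, a j i * ‖(star (Ua j) *ᵥ x) i‖^2 : ℝ) : ℂ) by push_cast; rfl] at hpos
    rw [Complex.zero_lt_real] at hpos
    obtain ⟨j0, hj0⟩ := exists_pos_of_sum_pos' hpos
    obtain ⟨i0, hi0⟩ := exists_pos_of_sum_pos' hj0
    have hai0 : 0 < a j0 i0 ∧ 0 < ‖(star (Ua j0) *ᵥ x) i0‖^2 := by
      rcases mul_pos_iff.mp hi0 with h | h
      · exact h
      · exact absurd h.1 (not_lt.mpr (hann j0 i0))
    rw [hSdef, sum_mulVec', dotProduct_sum' (star x)]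
    rw [Finset.sum_congr rfl (fun j _ => by
      rw [Matrix.smul_mulVec, dotProduct_smul, quadP j, smul_eq_mul, ← Complex.ofReal_mul] :
      ∀ j ∈ Finset.univ, dotProduct (star x) ((((w j / c j : ℝ) : ℂ) • mpow (A j) α) *ᵥ x)
        = (((w j / c j) * (∑ i, a j i ^ α * ‖(star (Ua j) *ᵥ x) i‖^2) : ℝ) : ℂ))]
    rw [show (∑ j, (((w j / c j) * (∑ i, a j i ^ α * ‖(star (Ua j) *ᵥ x) i‖^2) : ℝ) : ℂ))
        = ((∑ j, (w j / c j) * (∑ i, a j i ^ α * ‖(star (Ua j) *ᵥ x) i‖^2) : ℝ) : ℂ) by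
        push_cast; rfl]
    rw [Complex.zero_lt_real]
    refine Finset.sum_pos' (fun j _ => mul_nonneg (div_nonneg (hw j).le (hcpos j).le)
      (Finset.sum_nonneg (fun i _ => mul_nonneg (Real.rpow_nonneg (hann j i) _) (sq_nonneg _))))
      ⟨j0, Finset.mem_univ _, ?_⟩
    refine mul_pos (div_pos (hw j0) (hcpos j0)) ?_
    refine Finset.sum_pos' (fun i _ => mul_nonneg (Real.rpow_nonneg (hann j0 i) _) (sq_nonneg _))
      ⟨i0, Finset.mem_univ _, mul_pos (Real.rpow_pos_of_pos hai0.1 α) hai0.2⟩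
  -- S eigen-data
  set Us : Matrix (Fin d) (Fin d) ℂ := (hSh.eigenvectorUnitary : Matrix (Fin d) (Fin d) ℂ) with hUsdef
  set s : Fin d → ℝ := hSh.eigenvalues with hsdef
  have hUs : Us * star Us = 1 := Matrix.mem_unitaryGroup_iff.mp hSh.eigenvectorUnitary.2
  have hUs' : star Us * Us = 1 := mul_eq_one_comm.mp hUs
  have hspos : ∀ i, 0 < s i := fun i => hSpd.eigenvalues_pos i
  have hSspec : S = Us * Matrix.diagonal (fun i => ((s i : ℝ) : ℂ)) * star Us := by
    conv_lhs => rw [hSh.spectral_theorem]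
    rfl
  have hTF2 : TF w A α (mpow Q (1-α))
      = Us * Matrix.diagonal (fun i => ((s i ^ ((1-α)/α) : ℝ) : ℂ)) * star Us := by
    rw [hTFeq, hSspec]
    exact mpow_conj hUs s ((1-α)/α)
  have hexp1 : ((1-α)/α) * (1/(1-α)) = 1/α := by field_simp
  have hQ'eq : mpow (TF w A α (mpow Q (1-α))) (1/(1-α))
      = Us * Matrix.diagonal (fun i => ((s i ^ (1/α) : ℝ) : ℂ)) * star Us := by
    rw [hTF2, mpow_conj hUs]
    have hfun : (fun i => (((s i ^ ((1-α)/α)) ^ (1/(1-α)) : ℝ) : ℂ))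
        = fun i => ((s i ^ (1/α) : ℝ) : ℂ) := by
      funext i
      rw [← Real.rpow_mul (hspos i).le, hexp1]
    rw [hfun]
  have hmQ' : mpow (mpow (TF w A α (mpow Q (1-α))) (1/(1-α))) (1-α)
      = Us * Matrix.diagonal (fun i => ((s i ^ ((1-α)/α) : ℝ) : ℂ)) * star Us := by
    rw [hQ'eq, mpow_conj hUs]
    have hfun : (fun i => (((s i ^ (1/α)) ^ (1-α) : ℝ) : ℂ))
        = fun i => ((s i ^ ((1-α)/α) : ℝ) : ℂ) := by
      funext i
      rw [← Real.rpow_mul (hspos i).le, show (1/α) * (1-α) = (1-α)/α by ring]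
    rw [hfun]
  -- the constants dd j
  set dd : Fin n → ℝ :=
    fun j => ∑ i, ∑ k, (a j i ^ α) * (s k ^ ((1-α)/α)) * ‖(star (Ua j) * Us) i k‖^2 with hdddef
  have hdj : ∀ j, (mpow (A j) α * mpow (mpow (TF w A α (mpow Q (1-α))) (1/(1-α))) (1-α)).trace
      = ((dd j : ℝ) : ℂ) := by
    intro j
    rw [hPj j, hmQ']
    exact trace_conj_diag_mul (hUa j) hUs _ _
  have hddpos : ∀ j, 0 < dd j := by
    intro j
    obtain ⟨i0, hi0⟩ := haex j
    have hrow : ∑ k, ‖(star (Ua j) * Us) i0 k‖^2 = 1 :=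
      row_sum_norm (unitary_comb (hUa j) hUs).1 i0
    obtain ⟨k0, hk0⟩ := exists_pos_of_sum_pos' (by rw [hrow]; norm_num)
    refine sum2_pos (fun i k => mul_nonneg (mul_nonneg (Real.rpow_nonneg (hann j i) _)
      (Real.rpow_nonneg (hspos k).le _)) (sq_nonneg _)) ⟨i0, k0, ?_⟩
    have h1 : 0 < a j i0 ^ α := Real.rpow_pos_of_pos hi0 α
    have h2 : 0 < s k0 ^ ((1-α)/α) := Real.rpow_pos_of_pos (hspos k0) _
    positivity
  -- rewriting petzRenyi
  have hPetzQ : ∀ j, petzRenyi α (A j) Q = (α-1)⁻¹ * Real.log (c j) := by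
    intro j
    unfold petzRenyi
    rw [hcj j, Complex.ofReal_re]
  have hPetzQ' : ∀ j, petzRenyi α (A j) (mpow (TF w A α (mpow Q (1-α))) (1/(1-α)))
      = (α-1)⁻¹ * Real.log (dd j) := by
    intro j
    unfold petzRenyi
    rw [hdj j, Complex.ofReal_re]
  -- trace identities
  have T1 : (S * mpow (mpow (TF w A α (mpow Q (1-α))) (1/(1-α))) (1-α)).trace
      = ((∑ j, (w j / c j) * dd j : ℝ) : ℂ) := by
    rw [hSdef, Finset.sum_mul, Matrix.trace_sum]
    have e1 : ∀ j, ((((w j / c j : ℝ) : ℂ) • mpow (A j) α)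
        * mpow (mpow (TF w A α (mpow Q (1-α))) (1/(1-α))) (1-α)).trace
        = (((w j / c j) * dd j : ℝ) : ℂ) := fun j => by
      rw [smul_mul_assoc, Matrix.trace_smul, hdj j, smul_eq_mul, ← Complex.ofReal_mul]
    rw [Finset.sum_congr rfl (fun j _ => e1 j)]
    push_cast
    rfl
  have T2 : (S * mpow (mpow (TF w A α (mpow Q (1-α))) (1/(1-α))) (1-α)).trace
      = ((∑ i, s i ^ (1/α) : ℝ) : ℂ) := by
    rw [hSspec, hmQ', trace_conj_diag_mul hUs hUs, hUs']
    congr 1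
    refine Finset.sum_congr rfl (fun i _ => ?_)
    rw [Finset.sum_eq_single i]
    · rw [Matrix.one_apply_eq]
      rw [norm_one, one_pow, mul_one]
      nth_rewrite 1 [← Real.rpow_one (s i)]
      rw [← Real.rpow_add (hspos i)]
      congr 1
      field_simp
      ring
    · intro k _ hki
      rw [Matrix.one_apply_ne (Ne.symm hki)]
      simp
    · intro h
      exact absurd (Finset.mem_univ i) h
  have hτeq : ∑ j, (w j / c j) * dd j = ∑ i, s i ^ (1/α) :=
    Complex.ofReal_inj.mp (T1.symm.trans T2)
  have T3 : (S * mpow Q (1-α)).trace = ((∑ j, (w j / c j) * c j : ℝ) : ℂ) := by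
    rw [hSdef, Finset.sum_mul, Matrix.trace_sum]
    have e1 : ∀ j, ((((w j / c j : ℝ) : ℂ) • mpow (A j) α) * mpow Q (1-α)).trace
        = (((w j / c j) * c j : ℝ) : ℂ) := fun j => by
      rw [smul_mul_assoc, Matrix.trace_smul, hcj j, smul_eq_mul, ← Complex.ofReal_mul]
    rw [Finset.sum_congr rfl (fun j _ => e1 j)]
    push_cast
    rfl
  have T4 : (S * mpow Q (1-α)).trace
      = ((∑ i, ∑ k, s i * (q k ^ (1-α)) * ‖(star Us * Vq) i k‖^2 : ℝ) : ℂ) := by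
    rw [hSspec, hB]
    exact trace_conj_diag_mul hUs hVq _ _
  have hSB1 : ∑ i, ∑ k, s i * (q k ^ (1-α)) * ‖(star Us * Vq) i k‖^2 = 1 := by
    have h1 := Complex.ofReal_inj.mp (T4.symm.trans T3)
    rw [h1]
    rw [Finset.sum_congr rfl (fun j _ => div_mul_cancel₀ (w j) (ne_of_gt (hcpos j)))]
    exact hw1
  have hq1 : ∑ k, q k ≤ 1 := by
    have htr : Q.trace = ((∑ k, q k : ℝ) : ℂ) := by
      conv_lhs => rw [hQspec]
      exact trace_conj_diag hVq q
    rw [htr, show (1:ℂ) = ((1:ℝ):ℂ) by norm_num] at hTr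
    exact Complex.real_le_real.mp hTr
  -- the Young gap terms
  have hWrow : ∀ i, ∑ k, ‖(star Us * Vq) i k‖^2 = 1 :=
    fun i => row_sum_norm (unitary_comb hUs hVq).1 i
  have hWcol : ∀ k, ∑ i, ‖(star Us * Vq) i k‖^2 = 1 :=
    fun k => col_sum_norm (unitary_comb hUs hVq).2 k
  set e : Fin d → Fin d → ℝ := fun i k => ‖(star Us * Vq) i k‖^2 *
    ((1/α) * (s i * q k ^ (1-α)) + (1 - 1/α) * q k - s i ^ (1/α)) with hedef
  have henn : ∀ i k, 0 ≤ e i k := by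
    intro i k
    refine mul_nonneg (sq_nonneg _) ?_
    have := (young hα (hspos i).le (hqpos k)).1
    linarith
  have hesum : ∑ i, ∑ k, e i k
      = (1/α) * 1 + (1 - 1/α) * (∑ k, q k) - (∑ i, s i ^ (1/α)) := by
    have expand : ∀ i k, e i k = (1/α) * (s i * q k ^ (1-α) * ‖(star Us * Vq) i k‖^2)
        + (1-1/α) * (q k * ‖(star Us * Vq) i k‖^2)
        - s i ^ (1/α) * ‖(star Us * Vq) i k‖^2 := by
      intro i k
      rw [hedef]
      ring
    rw [Finset.sum_congr rfl (fun i _ => Finset.sum_congr rfl (fun k _ => expand i k))]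
    simp only [Finset.sum_add_distrib, Finset.sum_sub_distrib, ← Finset.mul_sum]
    rw [hSB1]
    congr 1
    · congr 1
      rw [Finset.sum_comm]
      rw [Finset.sum_congr rfl (fun k _ => by rw [← Finset.mul_sum, hWcol k, mul_one] :
        ∀ k ∈ Finset.univ, (∑ i, q k * ‖(star Us * Vq) i k‖^2) = q k)]
    · refine Finset.sum_congr rfl (fun i _ => ?_)
      rw [hWrow i, mul_one]
  -- τ ≤ 1
  have hτ1 : ∑ i, s i ^ (1/α) ≤ 1 := by
    have hge : 0 ≤ ∑ i, ∑ k, e i k :=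
      Finset.sum_nonneg (fun i _ => Finset.sum_nonneg (fun k _ => henn i k))
    have hmul : (1 - 1/α) * (∑ k, q k) ≤ (1 - 1/α) * 1 :=
      mul_le_mul_of_nonneg_left hq1 h1θ.le
    rw [hesum] at hge
    linarith
  -- rewrite the two objective values
  have hL : (∑ j, w j * petzRenyi α (A j) (mpow (TF w A α (mpow Q (1 - α))) (1 / (1 - α))))
      = (α-1)⁻¹ * ∑ j, w j * Real.log (dd j) := by
    rw [Finset.mul_sum]
    refine Finset.sum_congr rfl (fun j _ => ?_)
    rw [hPetzQ' j]
    ring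
  have hR : (∑ j, w j * petzRenyi α (A j) Q) = (α-1)⁻¹ * ∑ j, w j * Real.log (c j) := by
    rw [Finset.mul_sum]
    refine Finset.sum_congr rfl (fun j _ => ?_)
    rw [hPetzQ j]
    ring
  have hinv : (0:ℝ) < (α-1)⁻¹ := by positivity
  have hdiff : ∑ j, w j * (Real.log (dd j) - Real.log (c j))
      = (∑ j, w j * Real.log (dd j)) - ∑ j, w j * Real.log (c j) := by
    rw [← Finset.sum_sub_distrib]
    exact Finset.sum_congr rfl (fun j _ => by ring)
  have hlogle : ∑ j, w j * (Real.log (dd j) - Real.log (c j)) ≤ (∑ i, s i ^ (1/α)) - 1 := by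
    have h1 : ∀ j, w j * (Real.log (dd j) - Real.log (c j)) ≤ (w j / c j) * dd j - w j := by
      intro j
      have hlog : Real.log (dd j) - Real.log (c j) = Real.log (dd j / c j) :=
        (Real.log_div (ne_of_gt (hddpos j)) (ne_of_gt (hcpos j))).symm
      have hle : Real.log (dd j / c j) ≤ dd j / c j - 1 :=
        Real.log_le_sub_one_of_pos (div_pos (hddpos j) (hcpos j))
      have h2 := mul_le_mul_of_nonneg_left hle (hw j).le
      rw [hlog]
      calc w j * Real.log (dd j / c j) ≤ w j * (dd j / c j - 1) := h2
        _ = (w j / c j) * dd j - w j := by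
            field_simp
    calc ∑ j, w j * (Real.log (dd j) - Real.log (c j))
        ≤ ∑ j, ((w j / c j) * dd j - w j) := Finset.sum_le_sum (fun j _ => h1 j)
      _ = (∑ j, (w j / c j) * dd j) - ∑ j, w j := Finset.sum_sub_distrib _ _
      _ = (∑ i, s i ^ (1/α)) - 1 := by rw [hτeq, hw1]
  constructor
  · rw [hL, hR]
    refine mul_le_mul_of_nonneg_left ?_ hinv.le
    rw [hdiff] at hlogle
    linarith
  constructor
  · -- equality implies fixed point
    intro heq
    have hXY : ∑ j, w j * Real.log (dd j) = ∑ j, w j * Real.log (c j) := by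
      rw [hL, hR] at heq
      exact mul_left_cancel₀ (ne_of_gt hinv) heq
    have hτge : 1 ≤ ∑ i, s i ^ (1/α) := by
      have h0 : ∑ j, w j * (Real.log (dd j) - Real.log (c j)) = 0 := by
        rw [hdiff, hXY, sub_self]
      linarith [hlogle]
    have hesum0 : ∑ i, ∑ k, e i k ≤ 0 := by
      rw [hesum]
      have hmul : (1 - 1/α) * (∑ k, q k) ≤ (1 - 1/α) * 1 :=
        mul_le_mul_of_nonneg_left hq1 h1θ.le
      linarith
    have hek0 := sum2_eq_zero henn hesum0
    have hcomm : Matrix.diagonal (fun i => ((s i ^ (1/α) : ℝ) : ℂ)) * (star Us * Vq)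
        = (star Us * Vq) * Matrix.diagonal (fun i => ((q i : ℝ) : ℂ)) := by
      ext i k
      simp only [Matrix.diagonal_mul, Matrix.mul_diagonal]
      by_cases hW : (star Us * Vq) i k = 0
      · rw [hW]; ring
      · have hnorm : ‖(star Us * Vq) i k‖^2 ≠ 0 :=
          pow_ne_zero _ (norm_ne_zero_iff.mpr hW)
        have hik := hek0 i k
        simp only [hedef] at hik
        have hgap : (1/α) * (s i * q k ^ (1-α)) + (1 - 1/α) * q k - s i ^ (1/α) = 0 := by
          rcases mul_eq_zero.mp hik with h | h
          · exact absurd h hnorm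
          · exact h
        have hy : q k = s i ^ (1/α) :=
          (young hα (hspos i).le (hqpos k)).2 (by linarith)
        rw [hy]
        ring
    have hQeq : Q = Us * Matrix.diagonal (fun i => ((s i ^ (1/α) : ℝ) : ℂ)) * star Us := by
      rw [hQspec]
      exact (conj_of_diag_comm hUs hVq hcomm).symm
    rw [hTF2]
    have hmB : mpow Q (1-α)
        = Us * Matrix.diagonal (fun i => ((s i ^ ((1-α)/α) : ℝ) : ℂ)) * star Us := by
      conv_lhs => rw [hQeq]
      rw [mpow_conj hUs]
      have hfun : (fun i => (((s i ^ (1/α)) ^ (1-α) : ℝ) : ℂ))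
          = fun i => ((s i ^ ((1-α)/α) : ℝ) : ℂ) := by
        funext i
        rw [← Real.rpow_mul (hspos i).le, show (1/α) * (1-α) = (1-α)/α by ring]
      rw [hfun]
    rw [hmB]
  · -- fixed point implies equality
    intro hfix
    have hQ'Q : mpow (TF w A α (mpow Q (1-α))) (1/(1-α)) = Q := by
      rw [hfix, hB, mpow_conj hVq]
      have hfun : (fun i => (((q i ^ (1-α)) ^ (1/(1-α)) : ℝ) : ℂ))
          = fun i => ((q i : ℝ) : ℂ) := by
        funext i
        rw [← Real.rpow_mul (hqpos i).le, mul_one_div_cancel h1mα, Real.rpow_one]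
      rw [hfun, ← hQspec]
    rw [hQ'Q]


end
end

section
/- Let α ∈ (0, 1) ∪ (1, ∞) and let U, V be positive definite Hermitian matrices in ℂ^{d×d} with Tr[V] = 1. Then d_T( V^{1−α}, (U / Tr[U])^{1−α} ) ≤ 2 · d_T( V^{1−α}, U^{1−α} ). -/
open scoped ComplexOrder
open Matrix

noncomputable section

section ThompsonAux

-- Bernoulli tangent lines
lemma rpow_le_tangent {x β : ℝ} (hx : 0 < x) (hβ0 : 0 < β) (hβ1 : β < 1) :
    x ^ β ≤ 1 + β * (x - 1) := by
  rcases eq_or_ne x 1 with rfl | hx1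
  · simp
  · have h := rpow_one_add_lt_one_add_mul_self (s := x - 1) (by linarith)
      (fun h => hx1 (by linarith)) hβ0 hβ1
    have : (1 : ℝ) + (x - 1) = x := by ring
    rw [this] at h
    exact h.le

lemma tangent_le_rpow_of_neg {x β : ℝ} (hx : 0 < x) (hβ : β < 0) :
    1 + β * (x - 1) ≤ x ^ β := by
  have h1 : x ^ β = Real.exp (Real.log x * β) := by
    rw [Real.rpow_def_of_pos hx]
  have h2 : Real.log x ≤ x - 1 := Real.log_le_sub_one_of_pos hx
  have h3 : 1 + Real.log x * β ≤ Real.exp (Real.log x * β) := by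
    linarith [Real.add_one_le_exp (Real.log x * β)]
  nlinarith

lemma jensen_le {d : ℕ} {p lam : Fin d → ℝ} (hp : ∀ i, 0 ≤ p i) (hp1 : ∑ i, p i = 1)
    (hlam : ∀ i, 0 < lam i) {β : ℝ} (hβ0 : 0 < β) (hβ1 : β < 1) :
    ∑ i, p i * lam i ^ β ≤ (∑ i, p i * lam i) ^ β := by
  set t := ∑ i, p i * lam i with ht_def
  have ht : 0 < t := by
    obtain ⟨i, hi⟩ : ∃ i, 0 < p i := by
      by_contra h
      push_neg at h
      have : ∑ i, p i = 0 := Finset.sum_eq_zero fun i _ => le_antisymm (h i) (hp i)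
      simp [this] at hp1
    have : 0 < p i * lam i := mul_pos hi (hlam i)
    calc (0:ℝ) < p i * lam i := this
    _ ≤ t := Finset.single_le_sum (fun j _ => mul_nonneg (hp j) (hlam j).le) (Finset.mem_univ i)
  have key : ∀ i, p i * lam i ^ β ≤ t ^ β * (p i + (β/t) * (p i * lam i) - β * p i) := by
    intro i
    have h1 : lam i ^ β = t ^ β * (lam i / t) ^ β := by
      rw [← Real.mul_rpow ht.le (div_pos (hlam i) ht).le]
      rw [mul_div_cancel₀ _ ht.ne']
    have h2 : (lam i / t) ^ β ≤ 1 + β * (lam i / t - 1) :=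
      rpow_le_tangent (div_pos (hlam i) ht) hβ0 hβ1
    have h3 : p i * lam i ^ β ≤ p i * (t ^ β * (1 + β * (lam i / t - 1))) := by
      rw [h1]
      apply mul_le_mul_of_nonneg_left _ (hp i)
      exact mul_le_mul_of_nonneg_left h2 (Real.rpow_nonneg ht.le β)
    calc p i * lam i ^ β ≤ p i * (t ^ β * (1 + β * (lam i / t - 1))) := h3
    _ = t ^ β * (p i + (β/t) * (p i * lam i) - β * p i) := by field_simp; ring
  have hsum : ∑ i, (p i + (β/t) * (p i * lam i) - β * p i) = 1 := by
    simp only [Finset.sum_sub_distrib, Finset.sum_add_distrib, ← Finset.mul_sum, hp1, ← ht_def]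
    field_simp
    ring
  calc ∑ i, p i * lam i ^ β ≤ ∑ i, t ^ β * (p i + (β/t) * (p i * lam i) - β * p i) :=
        Finset.sum_le_sum fun i _ => key i
  _ = t ^ β := by rw [← Finset.mul_sum, hsum, mul_one]

lemma jensen_ge {d : ℕ} {p lam : Fin d → ℝ} (hp : ∀ i, 0 ≤ p i) (hp1 : ∑ i, p i = 1)
    (hlam : ∀ i, 0 < lam i) {β : ℝ} (hβ : β < 0) :
    (∑ i, p i * lam i) ^ β ≤ ∑ i, p i * lam i ^ β := by
  set t := ∑ i, p i * lam i with ht_def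
  have ht : 0 < t := by
    obtain ⟨i, hi⟩ : ∃ i, 0 < p i := by
      by_contra h
      push_neg at h
      have : ∑ i, p i = 0 := Finset.sum_eq_zero fun i _ => le_antisymm (h i) (hp i)
      simp [this] at hp1
    have : 0 < p i * lam i := mul_pos hi (hlam i)
    calc (0:ℝ) < p i * lam i := this
    _ ≤ t := Finset.single_le_sum (fun j _ => mul_nonneg (hp j) (hlam j).le) (Finset.mem_univ i)
  have key : ∀ i, t ^ β * (p i + (β/t) * (p i * lam i) - β * p i) ≤ p i * lam i ^ β := by
    intro i
    have h1 : lam i ^ β = t ^ β * (lam i / t) ^ β := by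
      rw [← Real.mul_rpow ht.le (div_pos (hlam i) ht).le]
      rw [mul_div_cancel₀ _ ht.ne']
    have h2 : 1 + β * (lam i / t - 1) ≤ (lam i / t) ^ β :=
      tangent_le_rpow_of_neg (div_pos (hlam i) ht) hβ
    have h3 : p i * (t ^ β * (1 + β * (lam i / t - 1))) ≤ p i * lam i ^ β := by
      rw [h1]
      apply mul_le_mul_of_nonneg_left _ (hp i)
      exact mul_le_mul_of_nonneg_left h2 (Real.rpow_nonneg ht.le β)
    calc t ^ β * (p i + (β/t) * (p i * lam i) - β * p i)
        = p i * (t ^ β * (1 + β * (lam i / t - 1))) := by field_simp; ring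
    _ ≤ p i * lam i ^ β := h3
  have hsum : ∑ i, (p i + (β/t) * (p i * lam i) - β * p i) = 1 := by
    simp only [Finset.sum_sub_distrib, Finset.sum_add_distrib, ← Finset.mul_sum, hp1, ← ht_def]
    field_simp
    ring
  calc (∑ i, p i * lam i) ^ β
      = ∑ i, t ^ β * (p i + (β/t) * (p i * lam i) - β * p i) := by
        rw [← Finset.mul_sum, hsum, mul_one, ht_def]
  _ ≤ ∑ i, p i * lam i ^ β := Finset.sum_le_sum fun i _ => key i

variable {d : ℕ}

/-- real quadratic form -/
def qf (M : Matrix (Fin d) (Fin d) ℂ) (x : Fin d → ℂ) : ℝ := (star x ⬝ᵥ M *ᵥ x).re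

lemma conj_diag_dot (W : Matrix (Fin d) (Fin d) ℂ) (f : Fin d → ℝ) (x : Fin d → ℂ) :
    star x ⬝ᵥ ((W * Matrix.diagonal (fun i => (f i : ℂ)) * star W) *ᵥ x)
      = ((∑ i, f i * Complex.normSq ((star W *ᵥ x) i) : ℝ) : ℂ) := by
  rw [← Matrix.mulVec_mulVec, ← Matrix.mulVec_mulVec]
  rw [Matrix.dotProduct_mulVec]
  have hz : star x ᵥ* W = star (star W *ᵥ x) := by
    rw [Matrix.star_mulVec, Matrix.star_eq_conjTranspose, Matrix.conjTranspose_conjTranspose]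
  rw [hz]
  set z := star W *ᵥ x with hzdef
  push_cast
  simp only [dotProduct, Matrix.mulVec_diagonal, Pi.star_apply]
  congr 1
  ext i
  rw [mul_comm (star (z i)), mul_assoc]
  simp [Complex.star_def, Complex.mul_conj]

lemma qf_conj_diag (W : Matrix (Fin d) (Fin d) ℂ) (f : Fin d → ℝ) (x : Fin d → ℂ) :
    qf (W * Matrix.diagonal (fun i => (f i : ℂ)) * star W) x
      = ∑ i, f i * Complex.normSq ((star W *ᵥ x) i) := by
  rw [qf, conj_diag_dot, Complex.ofReal_re]
variable {d : ℕ} {A : Matrix (Fin d) (Fin d) ℂ}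

lemma mpow_eq (hA : A.IsHermitian) (r : ℝ) :
    mpow A r = (hA.eigenvectorUnitary : Matrix (Fin d) (Fin d) ℂ) *
      Matrix.diagonal (fun i => ((hA.eigenvalues i ^ r : ℝ) : ℂ)) *
      star (hA.eigenvectorUnitary : Matrix (Fin d) (Fin d) ℂ) := dif_pos hA

lemma spectral_theorem' (hA : A.IsHermitian) :
    A = (hA.eigenvectorUnitary : Matrix (Fin d) (Fin d) ℂ) *
      Matrix.diagonal (fun i => ((hA.eigenvalues i : ℝ) : ℂ)) *
      star (hA.eigenvectorUnitary : Matrix (Fin d) (Fin d) ℂ) := by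
  conv_lhs => rw [hA.spectral_theorem]
  rfl

lemma mpow_eq_cfc (hA : A.IsHermitian) (r : ℝ) :
    mpow A r = cfc (fun x : ℝ => x ^ r) A := by
  rw [hA.cfc_eq, mpow_eq hA, Matrix.IsHermitian.cfc]
  rfl

lemma unitary_star_mul (W : Matrix (Fin d) (Fin d) ℂ) (hW : W ∈ Matrix.unitaryGroup (Fin d) ℂ) :
    star W * W = 1 := Unitary.star_mul_self_of_mem hW

/-- the i-th column of W -/
def colv (W : Matrix (Fin d) (Fin d) ℂ) (i : Fin d) : Fin d → ℂ := fun j => W j i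

lemma star_mulVec_colv (W : Matrix (Fin d) (Fin d) ℂ)
    (hW : star W * W = 1) (i : Fin d) :
    star W *ᵥ colv W i = Pi.single i 1 := by
  funext k
  have h1 : (star W *ᵥ colv W i) k = (star W * W) k i := by
    simp [Matrix.mulVec, Matrix.mul_apply, dotProduct, colv]
  rw [h1, hW]
  simp [Matrix.one_apply, Pi.single_apply]

lemma sum_if_normSq (g : Fin d → ℝ) (i : Fin d) :
    ∑ k, g k * Complex.normSq (Pi.single (M := fun _ => ℂ) i 1 k) = g i := by
  rw [Finset.sum_eq_single i]
  · simp
  · intro k _ hk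
    simp [Pi.single_apply, hk]
  · simp

lemma qf_eq_sum (hA : A.IsHermitian) (x : Fin d → ℂ) :
    qf A x = ∑ i, hA.eigenvalues i *
      Complex.normSq ((star (hA.eigenvectorUnitary : Matrix (Fin d) (Fin d) ℂ) *ᵥ x) i) := by
  conv_lhs => rw [spectral_theorem' hA]
  rw [qf_conj_diag]

lemma qf_mpow_eq_sum (hA : A.IsHermitian) (r : ℝ) (x : Fin d → ℂ) :
    qf (mpow A r) x = ∑ i, hA.eigenvalues i ^ r *
      Complex.normSq ((star (hA.eigenvectorUnitary : Matrix (Fin d) (Fin d) ℂ) *ᵥ x) i) := by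
  rw [mpow_eq hA, qf_conj_diag]

lemma qf_mpow_colv (hA : A.IsHermitian) (r : ℝ) (i : Fin d) :
    qf (mpow A r) (colv (hA.eigenvectorUnitary : Matrix (Fin d) (Fin d) ℂ) i)
      = hA.eigenvalues i ^ r := by
  rw [qf_mpow_eq_sum hA, star_mulVec_colv _ (unitary_star_mul _ (SetLike.coe_mem _)),
    sum_if_normSq]

lemma qf_self_colv (hA : A.IsHermitian) (i : Fin d) :
    qf A (colv (hA.eigenvectorUnitary : Matrix (Fin d) (Fin d) ℂ) i) = hA.eigenvalues i := by
  rw [qf_eq_sum hA, star_mulVec_colv _ (unitary_star_mul _ (SetLike.coe_mem _)), sum_if_normSq]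

lemma sum_normSq_colv (W : Matrix (Fin d) (Fin d) ℂ) (hW : star W * W = 1) (i : Fin d) :
    ∑ j, Complex.normSq (colv W i j) = 1 := by
  have h1 : ((star W * W) i i) = ∑ j, (Complex.normSq (colv W i j) : ℂ) := by
    simp only [Matrix.mul_apply, Matrix.star_apply]
    congr 1
    ext j
    rw [mul_comm]
    simp [colv, Complex.star_def, Complex.mul_conj]
  rw [hW] at h1
  have := congrArg Complex.re h1
  simpa using this.symm

lemma sum_normSq_star_mulVec (Wb : Matrix (Fin d) (Fin d) ℂ)
    (hWb : Wb * star Wb = 1) (x : Fin d → ℂ) :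
    ∑ k, Complex.normSq ((star Wb *ᵥ x) k) = ∑ j, Complex.normSq (x j) := by
  have h := qf_conj_diag Wb (fun _ => (1:ℝ)) x
  have h2 : Wb * Matrix.diagonal (fun _ => ((1:ℝ):ℂ)) * star Wb = 1 := by
    simp [hWb]
  rw [h2] at h
  have h3 : qf 1 x = ∑ j, Complex.normSq (x j) := by
    simp only [qf, Matrix.one_mulVec, dotProduct, Pi.star_apply]
    have hterm : ∀ j, star (x j) * x j = ((Complex.normSq (x j) : ℝ) : ℂ) := fun j => by
      rw [mul_comm]; simp [Complex.star_def, Complex.mul_conj]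
    rw [Finset.sum_congr rfl (fun j _ => hterm j), ← Complex.ofReal_sum, Complex.ofReal_re]
  rw [h3] at h
  simpa using h.symm

lemma loewnerLE.qf_le {M N : Matrix (Fin d) (Fin d) ℂ} (h : loewnerLE M N) (x : Fin d → ℂ) :
    qf M x ≤ qf N x := by
  have h2 := Matrix.PosSemidef.dotProduct_mulVec_nonneg h x
  rw [Complex.le_def] at h2
  have h3 : (star x ⬝ᵥ (N - M) *ᵥ x).re = qf N x - qf M x := by
    simp [qf, Matrix.sub_mulVec, dotProduct_sub]
  simp only [Complex.zero_re] at h2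
  linarith [h2.1]

lemma qf_smul (c : ℝ) (M : Matrix (Fin d) (Fin d) ℂ) (x : Fin d → ℂ) :
    qf (c • M) x = c * qf M x := by
  simp [qf, Matrix.smul_mulVec, dotProduct_smul, Complex.real_smul,
    Complex.mul_re]

lemma posSemidef_real_smul {M : Matrix (Fin d) (Fin d) ℂ} (h : M.PosSemidef) {c : ℝ}
    (hc : 0 ≤ c) : (c • M).PosSemidef := by
  refine Matrix.PosSemidef.of_dotProduct_mulVec_nonneg ?_ ?_
  · have h1 := h.1
    rw [Matrix.IsHermitian, Matrix.conjTranspose_smul, star_trivial, h1]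
  · intro x
    have h2 := h.dotProduct_mulVec_nonneg x
    have h3 : star x ⬝ᵥ (c • M) *ᵥ x = (c:ℂ) * (star x ⬝ᵥ M *ᵥ x) := by
      rw [Matrix.smul_mulVec, dotProduct_smul, Complex.real_smul]
    rw [h3]
    exact mul_nonneg (by exact_mod_cast hc) h2

lemma loewnerLE_smul {M N : Matrix (Fin d) (Fin d) ℂ} (h : loewnerLE M N) {c : ℝ}
    (hc : 0 ≤ c) : loewnerLE (c • M) (c • N) := by
  have h1 := posSemidef_real_smul h hc
  rw [loewnerLE, ← smul_sub]
  exact h1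

lemma loewnerLE_add {M N P Q : Matrix (Fin d) (Fin d) ℂ} (h : loewnerLE M N)
    (h' : loewnerLE P Q) : loewnerLE (M + P) (N + Q) := by
  have h2 := Matrix.PosSemidef.add h h'
  rw [loewnerLE] at *
  convert h2 using 1
  abel

lemma sum_qf_colv (W : Matrix (Fin d) (Fin d) ℂ) (hW2 : W * star W = 1)
    (M : Matrix (Fin d) (Fin d) ℂ) :
    ∑ i, qf M (colv W i) = M.trace.re := by
  have h1 : ∑ i, (star (colv W i) ⬝ᵥ M *ᵥ colv W i) = (star W * M * W).trace := by
    apply Finset.sum_congr rfl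
    intro i _
    simp only [Matrix.trace, Matrix.diag, Matrix.mul_apply, dotProduct, Matrix.mulVec,
      colv, Pi.star_apply, Matrix.star_apply, Finset.sum_mul, Finset.mul_sum]
    rw [Finset.sum_comm]
    apply Finset.sum_congr rfl
    intro j _
    apply Finset.sum_congr rfl
    intro k _
    ring
  have h2 : (star W * M * W).trace = M.trace := by
    rw [Matrix.trace_mul_cycle, hW2, one_mul]
  calc ∑ i, qf M (colv W i) = (∑ i, star (colv W i) ⬝ᵥ M *ᵥ colv W i).re := by
        rw [Complex.re_sum]; rfl
  _ = M.trace.re := by rw [h1, h2]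

lemma trace_re_eq_sum_eigenvalues (hA : A.IsHermitian) :
    A.trace.re = ∑ i, hA.eigenvalues i := by
  have h1 := sum_qf_colv (hA.eigenvectorUnitary : Matrix (Fin d) (Fin d) ℂ)
    (Unitary.mul_star_self_of_mem (SetLike.coe_mem _)) A
  rw [← h1]
  apply Finset.sum_congr rfl
  intro i _
  exact qf_self_colv hA i

lemma mpow_posSemidef (hA : A.PosDef) (r : ℝ) : (mpow A r).PosSemidef := by
  rw [mpow_eq hA.1, Matrix.star_eq_conjTranspose]
  apply Matrix.PosSemidef.mul_mul_conjTranspose_same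
  apply Matrix.PosSemidef.diagonal
  intro i
  show (0:ℂ) ≤ _
  rw [Complex.zero_le_real]
  exact Real.rpow_nonneg (hA.eigenvalues_pos i).le r

lemma qf_pos {B : Matrix (Fin d) (Fin d) ℂ} (hB : B.PosDef) {x : Fin d → ℂ} (hx : x ≠ 0) :
    0 < qf B x := by
  have h := hB.re_dotProduct_pos hx
  simpa [qf] using h

lemma colv_ne_zero {A : Matrix (Fin d) (Fin d) ℂ} (hA : A.IsHermitian) (i : Fin d) :
    colv (hA.eigenvectorUnitary : Matrix (Fin d) (Fin d) ℂ) i ≠ 0 := by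
  intro h0
  have hxn := sum_normSq_colv (hA.eigenvectorUnitary : Matrix (Fin d) (Fin d) ℂ)
    (unitary_star_mul _ (SetLike.coe_mem _)) i
  rw [h0] at hxn
  simp at hxn

lemma qf_jensen_le {B : Matrix (Fin d) (Fin d) ℂ} (hB : B.PosDef) {β : ℝ}
    (hβ0 : 0 < β) (hβ1 : β < 1) {x : Fin d → ℂ} (hxn : ∑ j, Complex.normSq (x j) = 1) :
    qf (mpow B β) x ≤ (qf B x) ^ β := by
  have hWBu2 : (hB.1.eigenvectorUnitary : Matrix (Fin d) (Fin d) ℂ) *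
      star (hB.1.eigenvectorUnitary : Matrix (Fin d) (Fin d) ℂ) = 1 :=
    Unitary.mul_star_self_of_mem (SetLike.coe_mem _)
  have hp1 : ∑ k, Complex.normSq ((star (hB.1.eigenvectorUnitary :
      Matrix (Fin d) (Fin d) ℂ) *ᵥ x) k) = 1 := by
    rw [sum_normSq_star_mulVec _ hWBu2 x, hxn]
  have h1 : qf (mpow B β) x = ∑ k, Complex.normSq ((star (hB.1.eigenvectorUnitary :
      Matrix (Fin d) (Fin d) ℂ) *ᵥ x) k) * hB.1.eigenvalues k ^ β := by
    rw [qf_mpow_eq_sum hB.1]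
    exact Finset.sum_congr rfl fun k _ => mul_comm _ _
  have h2 : qf B x = ∑ k, Complex.normSq ((star (hB.1.eigenvectorUnitary :
      Matrix (Fin d) (Fin d) ℂ) *ᵥ x) k) * hB.1.eigenvalues k := by
    rw [qf_eq_sum hB.1]
    exact Finset.sum_congr rfl fun k _ => mul_comm _ _
  rw [h1, h2]
  exact jensen_le (fun k => Complex.normSq_nonneg _) hp1 (fun k => hB.eigenvalues_pos k) hβ0 hβ1

lemma qf_jensen_ge {B : Matrix (Fin d) (Fin d) ℂ} (hB : B.PosDef) {β : ℝ}
    (hβ : β < 0) {x : Fin d → ℂ} (hxn : ∑ j, Complex.normSq (x j) = 1) :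
    (qf B x) ^ β ≤ qf (mpow B β) x := by
  have hWBu2 : (hB.1.eigenvectorUnitary : Matrix (Fin d) (Fin d) ℂ) *
      star (hB.1.eigenvectorUnitary : Matrix (Fin d) (Fin d) ℂ) = 1 :=
    Unitary.mul_star_self_of_mem (SetLike.coe_mem _)
  have hp1 : ∑ k, Complex.normSq ((star (hB.1.eigenvectorUnitary :
      Matrix (Fin d) (Fin d) ℂ) *ᵥ x) k) = 1 := by
    rw [sum_normSq_star_mulVec _ hWBu2 x, hxn]
  have h1 : qf (mpow B β) x = ∑ k, Complex.normSq ((star (hB.1.eigenvectorUnitary :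
      Matrix (Fin d) (Fin d) ℂ) *ᵥ x) k) * hB.1.eigenvalues k ^ β := by
    rw [qf_mpow_eq_sum hB.1]
    exact Finset.sum_congr rfl fun k _ => mul_comm _ _
  have h2 : qf B x = ∑ k, Complex.normSq ((star (hB.1.eigenvectorUnitary :
      Matrix (Fin d) (Fin d) ℂ) *ᵥ x) k) * hB.1.eigenvalues k := by
    rw [qf_eq_sum hB.1]
    exact Finset.sum_congr rfl fun k _ => mul_comm _ _
  rw [h1, h2]
  exact jensen_ge (fun k => Complex.normSq_nonneg _) hp1 (fun k => hB.eigenvalues_pos k) hβ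

lemma trace_le_case_pos {A B : Matrix (Fin d) (Fin d) ℂ} (hA : A.PosDef) (hB : B.PosDef)
    {β e : ℝ} (hβ0 : 0 < β) (hβ1 : β < 1) (he : 0 < e)
    (h : loewnerLE (mpow A β) (e • mpow B β)) :
    A.trace.re ≤ e ^ (1/β) * B.trace.re := by
  have hWu : star (hA.1.eigenvectorUnitary : Matrix (Fin d) (Fin d) ℂ) *
      (hA.1.eigenvectorUnitary : Matrix (Fin d) (Fin d) ℂ) = 1 :=
    unitary_star_mul _ (SetLike.coe_mem _)
  have hWu2 : (hA.1.eigenvectorUnitary : Matrix (Fin d) (Fin d) ℂ) *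
      star (hA.1.eigenvectorUnitary : Matrix (Fin d) (Fin d) ℂ) = 1 :=
    Unitary.mul_star_self_of_mem (SetLike.coe_mem _)
  have key : ∀ i, hA.1.eigenvalues i ≤
      e ^ (1/β) * qf B (colv (hA.1.eigenvectorUnitary : Matrix (Fin d) (Fin d) ℂ) i) := by
    intro i
    have hxn : ∑ j, Complex.normSq
        (colv (hA.1.eigenvectorUnitary : Matrix (Fin d) (Fin d) ℂ) i j) = 1 :=
      sum_normSq_colv _ hWu i
    have hq : 0 < qf B (colv (hA.1.eigenvectorUnitary : Matrix (Fin d) (Fin d) ℂ) i) :=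
      qf_pos hB (colv_ne_zero hA.1 i)
    have hjen := qf_jensen_le hB hβ0 hβ1 hxn
    have hmid : qf (mpow A β) (colv (hA.1.eigenvectorUnitary : Matrix (Fin d) (Fin d) ℂ) i)
        ≤ e * qf (mpow B β) (colv (hA.1.eigenvectorUnitary : Matrix (Fin d) (Fin d) ℂ) i) := by
      have h6 := h.qf_le (colv (hA.1.eigenvectorUnitary : Matrix (Fin d) (Fin d) ℂ) i)
      rwa [qf_smul] at h6
    have h5 : (e ^ (1/β)) ^ β = e := by
      rw [← Real.rpow_mul he.le, one_div, inv_mul_cancel₀ hβ0.ne', Real.rpow_one]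
    have hfin : hA.1.eigenvalues i ^ β ≤
        (e ^ (1/β) * qf B (colv (hA.1.eigenvectorUnitary : Matrix (Fin d) (Fin d) ℂ) i)) ^ β := by
      rw [Real.mul_rpow (Real.rpow_nonneg he.le _) hq.le, h5]
      calc hA.1.eigenvalues i ^ β
          = qf (mpow A β) (colv (hA.1.eigenvectorUnitary : Matrix (Fin d) (Fin d) ℂ) i) :=
            (qf_mpow_colv hA.1 β i).symm
      _ ≤ e * qf (mpow B β) (colv (hA.1.eigenvectorUnitary : Matrix (Fin d) (Fin d) ℂ) i) := hmid
      _ ≤ e * (qf B (colv (hA.1.eigenvectorUnitary : Matrix (Fin d) (Fin d) ℂ) i)) ^ β :=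
            mul_le_mul_of_nonneg_left hjen he.le
    exact (Real.rpow_le_rpow_iff (hA.eigenvalues_pos i).le
      (by positivity) hβ0).mp hfin
  calc A.trace.re = ∑ i, hA.1.eigenvalues i := trace_re_eq_sum_eigenvalues hA.1
  _ ≤ ∑ i, e ^ (1/β) * qf B (colv (hA.1.eigenvectorUnitary : Matrix (Fin d) (Fin d) ℂ) i) :=
      Finset.sum_le_sum fun i _ => key i
  _ = e ^ (1/β) * ∑ i, qf B (colv (hA.1.eigenvectorUnitary : Matrix (Fin d) (Fin d) ℂ) i) := by
      rw [Finset.mul_sum]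
  _ = e ^ (1/β) * B.trace.re := by rw [sum_qf_colv _ hWu2 B]

lemma trace_le_case_neg {A B : Matrix (Fin d) (Fin d) ℂ} (hA : A.PosDef) (hB : B.PosDef)
    {β e : ℝ} (hβ : β < 0) (he : 0 < e)
    (h : loewnerLE (e • mpow B β) (mpow A β)) :
    A.trace.re ≤ e ^ (1/β) * B.trace.re := by
  have hWu : star (hA.1.eigenvectorUnitary : Matrix (Fin d) (Fin d) ℂ) *
      (hA.1.eigenvectorUnitary : Matrix (Fin d) (Fin d) ℂ) = 1 :=
    unitary_star_mul _ (SetLike.coe_mem _)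
  have hWu2 : (hA.1.eigenvectorUnitary : Matrix (Fin d) (Fin d) ℂ) *
      star (hA.1.eigenvectorUnitary : Matrix (Fin d) (Fin d) ℂ) = 1 :=
    Unitary.mul_star_self_of_mem (SetLike.coe_mem _)
  have key : ∀ i, hA.1.eigenvalues i ≤
      e ^ (1/β) * qf B (colv (hA.1.eigenvectorUnitary : Matrix (Fin d) (Fin d) ℂ) i) := by
    intro i
    have hxn : ∑ j, Complex.normSq
        (colv (hA.1.eigenvectorUnitary : Matrix (Fin d) (Fin d) ℂ) i j) = 1 :=
      sum_normSq_colv _ hWu i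
    have hq : 0 < qf B (colv (hA.1.eigenvectorUnitary : Matrix (Fin d) (Fin d) ℂ) i) :=
      qf_pos hB (colv_ne_zero hA.1 i)
    have hjen := qf_jensen_ge hB hβ hxn
    have hmid : e * qf (mpow B β) (colv (hA.1.eigenvectorUnitary : Matrix (Fin d) (Fin d) ℂ) i)
        ≤ qf (mpow A β) (colv (hA.1.eigenvectorUnitary : Matrix (Fin d) (Fin d) ℂ) i) := by
      have h6 := h.qf_le (colv (hA.1.eigenvectorUnitary : Matrix (Fin d) (Fin d) ℂ) i)
      rwa [qf_smul] at h6
    have h5 : (e ^ (1/β)) ^ β = e := by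
      rw [← Real.rpow_mul he.le, one_div, inv_mul_cancel₀ hβ.ne, Real.rpow_one]
    have hfin : (e ^ (1/β) * qf B (colv (hA.1.eigenvectorUnitary :
        Matrix (Fin d) (Fin d) ℂ) i)) ^ β ≤ hA.1.eigenvalues i ^ β := by
      rw [Real.mul_rpow (Real.rpow_nonneg he.le _) hq.le, h5]
      calc e * (qf B (colv (hA.1.eigenvectorUnitary : Matrix (Fin d) (Fin d) ℂ) i)) ^ β
          ≤ e * qf (mpow B β) (colv (hA.1.eigenvectorUnitary : Matrix (Fin d) (Fin d) ℂ) i) :=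
            mul_le_mul_of_nonneg_left hjen he.le
      _ ≤ qf (mpow A β) (colv (hA.1.eigenvectorUnitary : Matrix (Fin d) (Fin d) ℂ) i) := hmid
      _ = hA.1.eigenvalues i ^ β := qf_mpow_colv hA.1 β i
    exact ((Real.rpow_le_rpow_iff_of_neg (by positivity)
      (hA.eigenvalues_pos i) hβ).mp hfin)
  calc A.trace.re = ∑ i, hA.1.eigenvalues i := trace_re_eq_sum_eigenvalues hA.1
  _ ≤ ∑ i, e ^ (1/β) * qf B (colv (hA.1.eigenvectorUnitary : Matrix (Fin d) (Fin d) ℂ) i) :=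
      Finset.sum_le_sum fun i _ => key i
  _ = e ^ (1/β) * ∑ i, qf B (colv (hA.1.eigenvectorUnitary : Matrix (Fin d) (Fin d) ℂ) i) := by
      rw [Finset.mul_sum]
  _ = e ^ (1/β) * B.trace.re := by rw [sum_qf_colv _ hWu2 B]

lemma mpow_real_smul {U : Matrix (Fin d) (Fin d) ℂ} (hU : U.PosDef) {c : ℝ} (hc : 0 < c)
    (β : ℝ) : mpow ((c:ℂ) • U) β = (c ^ β) • mpow U β := by
  have hsa : IsSelfAdjoint U := hU.1
  have h1 : (c:ℂ) • U = c • U := by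
    rw [← smul_one_smul ℂ c U]
    norm_num
  have hsm : (c • U : Matrix (Fin d) (Fin d) ℂ).IsHermitian := by
    rw [Matrix.IsHermitian, Matrix.conjTranspose_smul, star_trivial, hU.1.eq]
  rw [h1, mpow_eq_cfc hsm β, mpow_eq_cfc hU.1 β]
  have h2 : cfc (fun x : ℝ => x ^ β) (c • U) = cfc (fun x : ℝ => (c • x : ℝ) ^ β) U :=
    (cfc_comp_smul c (fun x : ℝ => x ^ β) U
      ((Matrix.finite_real_spectrum.image _).continuousOn _) hsa).symm
  rw [h2]
  have h3 : cfc (fun x : ℝ => (c • x : ℝ) ^ β) U = cfc (fun x : ℝ => c ^ β * x ^ β) U := by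
    apply cfc_congr
    intro x hx
    have hxpos : 0 < x := by
      rw [hU.1.spectrum_real_eq_range_eigenvalues] at hx
      obtain ⟨i, rfl⟩ := hx
      exact hU.eigenvalues_pos i
    simp only [smul_eq_mul]
    rw [Real.mul_rpow hc.le hxpos.le]
  rw [h3, cfc_const_mul (c ^ β) (fun x : ℝ => x ^ β) U
    (Matrix.finite_real_spectrum.continuousOn _)]

lemma trace_real {U : Matrix (Fin d) (Fin d) ℂ} (hU : U.IsHermitian) :
    U.trace = ((U.trace.re : ℝ) : ℂ) := by
  have h : (starRingEnd ℂ) U.trace = U.trace := by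
    have h2 := Matrix.trace_conjTranspose U
    rw [hU.eq] at h2
    exact h2.symm
  exact (Complex.conj_eq_iff_re.mp h).symm
end ThompsonAux

/-- the Thompson metric is preserved under trace-normalization up to a
factor `2`: `d_T(V^(1-α), (U/Tr[U])^(1-α)) ≤ 2 d_T(V^(1-α), U^(1-α))`. -/
theorem thompson_normalization_stable {d : ℕ} (α : ℝ)
    (hα : α ∈ Set.Ioo (0 : ℝ) 1 ∪ Set.Ioi (1 : ℝ))
    (U V : Matrix (Fin d) (Fin d) ℂ) (hU : U.PosDef) (hV : V.PosDef)
    (hV1 : V.trace = 1) :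
    dTmat (mpow V (1 - α)) (mpow ((U.trace)⁻¹ • U) (1 - α)) ≤
      ((2 : ℝ) : EReal) * dTmat (mpow V (1 - α)) (mpow U (1 - α)) := by
  set β := 1 - α with hβ_def
  have hβ : (0 < β ∧ β < 1) ∨ β < 0 := by
    rcases hα with hα | hα
    · obtain ⟨h1, h2⟩ := hα
      left
      constructor <;> simp only [hβ_def] <;> linarith
    · right
      have h3 : 1 < α := hα
      simp only [hβ_def]; linarith
  have hβne : β ≠ 0 := by rcases hβ with ⟨h1, _⟩ | h1; exacts [h1.ne', h1.ne]
  have hd : 0 < d := by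
    rcases Nat.eq_zero_or_pos d with rfl | h
    · exfalso
      rw [Matrix.trace] at hV1
      simp at hV1
    · exact h
  haveI : Nonempty (Fin d) := Fin.pos_iff_nonempty.mp hd
  have hVtr : V.trace.re = 1 := by rw [hV1]; simp
  set tU : ℝ := U.trace.re with htU_def
  have htU : U.trace = (tU : ℂ) := trace_real hU.1
  have htUpos : 0 < tU := by
    rw [htU_def, trace_re_eq_sum_eigenvalues hU.1]
    exact Finset.sum_pos (fun i _ => hU.eigenvalues_pos i) Finset.univ_nonempty
  set Vb := mpow V β with hVb_def
  set Ub := mpow U β with hUb_def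
  have hUbPSD : Ub.PosSemidef := mpow_posSemidef hU β
  have main : ∀ r : ℝ, 0 ≤ r → loewnerLE (Real.exp (-r) • Vb) Ub →
      loewnerLE Ub (Real.exp r • Vb) →
      dTmat Vb (mpow ((U.trace)⁻¹ • U) β) ≤ ((2*r : ℝ) : EReal) := by
    intro r hr hP1 hP2
    have hP1' : loewnerLE Vb (Real.exp r • Ub) := by
      have h := loewnerLE_smul hP1 (Real.exp_pos r).le
      rwa [smul_smul, ← Real.exp_add, add_neg_cancel, Real.exp_zero, one_smul] at h
    have hP2' : loewnerLE (Real.exp (-r) • Ub) Vb := by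
      have h := loewnerLE_smul hP2 (Real.exp_pos (-r)).le
      rwa [smul_smul, ← Real.exp_add, neg_add_cancel, Real.exp_zero, one_smul] at h
    have htUb : tU ≤ Real.exp (r/|β|) ∧ Real.exp (-(r/|β|)) ≤ tU := by
      rcases hβ with ⟨hβ0, hβ1⟩ | hβn
      · have habs : |β| = β := abs_of_pos hβ0
        have hpow : (Real.exp r) ^ (1/β) = Real.exp (r/|β|) := by
          rw [← Real.exp_mul, habs]
          congr 1
          ring
        constructor
        · have h := trace_le_case_pos hU hV hβ0 hβ1 (Real.exp_pos r) hP2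
          rw [hVtr, mul_one, hpow] at h
          exact h
        · have h := trace_le_case_pos hV hU hβ0 hβ1 (Real.exp_pos r) hP1'
          rw [hVtr, hpow] at h
          have h' : 1 ≤ tU * Real.exp (r/|β|) := by rwa [mul_comm] at h
          rw [Real.exp_neg, inv_eq_one_div]
          rw [div_le_iff₀ (Real.exp_pos _)]
          exact h'
      · have habs : |β| = -β := abs_of_neg hβn
        have hpow : (Real.exp (-r)) ^ (1/β) = Real.exp (r/|β|) := by
          rw [← Real.exp_mul, habs]
          congr 1
          rw [div_neg]
          field_simp
        constructor
        · have h := trace_le_case_neg hU hV hβn (Real.exp_pos (-r)) hP1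
          rw [hVtr, mul_one, hpow] at h
          exact h
        · have h := trace_le_case_neg hV hU hβn (Real.exp_pos (-r)) hP2'
          rw [hVtr, hpow] at h
          have h' : 1 ≤ tU * Real.exp (r/|β|) := by rwa [mul_comm] at h
          rw [Real.exp_neg, inv_eq_one_div]
          rw [div_le_iff₀ (Real.exp_pos _)]
          exact h'
    have hc0pos : 0 < tU⁻¹ := inv_pos.mpr htUpos
    have hmp : mpow ((U.trace)⁻¹ • U) β = (tU⁻¹ ^ β) • Ub := by
      rw [htU, ← Complex.ofReal_inv]
      exact mpow_real_smul hU hc0pos β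
    have hcbpos : 0 < tU⁻¹ ^ β := Real.rpow_pos_of_pos hc0pos β
    have hcb1 : Real.exp (-r) ≤ tU⁻¹ ^ β := by
      rcases hβ with ⟨hβ0, hβ1⟩ | hβn
      · have habs : |β| = β := abs_of_pos hβ0
        have h1 : Real.exp (-(r/|β|)) ≤ tU⁻¹ := by
          rw [Real.exp_neg]
          exact inv_anti₀ htUpos htUb.1
        calc Real.exp (-r) = (Real.exp (-(r/|β|))) ^ β := by
              rw [← Real.exp_mul, habs]
              congr 1
              field_simp
        _ ≤ tU⁻¹ ^ β := Real.rpow_le_rpow (Real.exp_pos _).le h1 hβ0.le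
      · have habs : |β| = -β := abs_of_neg hβn
        have h1 : tU⁻¹ ≤ Real.exp (r/|β|) := by
          calc tU⁻¹ ≤ (Real.exp (-(r/|β|)))⁻¹ := inv_anti₀ (Real.exp_pos _) htUb.2
          _ = Real.exp (r/|β|) := by rw [← Real.exp_neg, neg_neg]
        calc Real.exp (-r) = (Real.exp (r/|β|)) ^ β := by
              rw [← Real.exp_mul, habs]
              congr 1
              rw [div_neg]
              field_simp
        _ ≤ tU⁻¹ ^ β := Real.rpow_le_rpow_of_nonpos hc0pos h1 hβn.le
    have hcb2 : tU⁻¹ ^ β ≤ Real.exp r := by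
      rcases hβ with ⟨hβ0, hβ1⟩ | hβn
      · have habs : |β| = β := abs_of_pos hβ0
        have h1 : tU⁻¹ ≤ Real.exp (r/|β|) := by
          calc tU⁻¹ ≤ (Real.exp (-(r/|β|)))⁻¹ := inv_anti₀ (Real.exp_pos _) htUb.2
          _ = Real.exp (r/|β|) := by rw [← Real.exp_neg, neg_neg]
        calc tU⁻¹ ^ β ≤ (Real.exp (r/|β|)) ^ β :=
              Real.rpow_le_rpow hc0pos.le h1 hβ0.le
        _ = Real.exp r := by
              rw [← Real.exp_mul, habs]
              congr 1
              field_simp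
      · have habs : |β| = -β := abs_of_neg hβn
        have h1 : Real.exp (-(r/|β|)) ≤ tU⁻¹ := by
          rw [Real.exp_neg]
          exact inv_anti₀ htUpos htUb.1
        calc tU⁻¹ ^ β ≤ (Real.exp (-(r/|β|))) ^ β :=
              Real.rpow_le_rpow_of_nonpos (Real.exp_pos _) h1 hβn.le
        _ = Real.exp r := by
              rw [← Real.exp_mul, habs]
              congr 1
              field_simp
    have w1 : loewnerLE (Real.exp (-(2*r)) • Vb) ((tU⁻¹ ^ β) • Ub) := by
      have e1 : (tU⁻¹ ^ β) • Ub - Real.exp (-(2*r)) • Vb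
          = (tU⁻¹ ^ β - Real.exp (-r)) • Ub + Real.exp (-r) • (Ub - Real.exp (-r) • Vb) := by
        have hexp : Real.exp (-(2*r)) = Real.exp (-r) * Real.exp (-r) := by
          rw [← Real.exp_add]
          ring_nf
        rw [hexp]
        module
      show ((tU⁻¹ ^ β) • Ub - Real.exp (-(2*r)) • Vb).PosSemidef
      rw [e1]
      exact Matrix.PosSemidef.add
        (posSemidef_real_smul hUbPSD (by linarith [hcb1]))
        (posSemidef_real_smul hP1 (Real.exp_pos (-r)).le)
    have w2 : loewnerLE ((tU⁻¹ ^ β) • Ub) (Real.exp (2*r) • Vb) := by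
      have e2 : Real.exp (2*r) • Vb - (tU⁻¹ ^ β) • Ub
          = (Real.exp r - tU⁻¹ ^ β) • Ub + Real.exp r • (Real.exp r • Vb - Ub) := by
        have hexp : Real.exp (2*r) = Real.exp r * Real.exp r := by
          rw [← Real.exp_add]
          ring_nf
        rw [hexp]
        module
      show (Real.exp (2*r) • Vb - (tU⁻¹ ^ β) • Ub).PosSemidef
      rw [e2]
      exact Matrix.PosSemidef.add
        (posSemidef_real_smul hUbPSD (by linarith [hcb2]))
        (posSemidef_real_smul hP2 (Real.exp_pos r).le)
    rw [hmp]
    unfold dTmat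
    apply sInf_le
    exact ⟨2*r, by linarith, rfl, w1, w2⟩
  -- EReal endgame
  set S := {x : EReal | ∃ r : ℝ, 0 ≤ r ∧ x = (r : EReal) ∧
      loewnerLE (Real.exp (-r) • Vb) Ub ∧ loewnerLE Ub (Real.exp r • Vb)} with hS_def
  have hdT : dTmat Vb Ub = sInf S := rfl
  rcases Set.eq_empty_or_nonempty S with hSe | hSne
  · rw [hdT, hSe, sInf_empty, EReal.coe_mul_top_of_pos (by norm_num : (0:ℝ) < 2)]
    exact le_top
  · have hR0 : (0:EReal) ≤ sInf S := le_sInf (fun x hx => by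
      obtain ⟨r, hr, rfl, -, -⟩ := hx
      exact_mod_cast hr)
    have hRtop : sInf S ≠ ⊤ := by
      obtain ⟨x0, hx0⟩ := hSne
      have hle : sInf S ≤ x0 := sInf_le hx0
      rw [hS_def] at hx0
      obtain ⟨r0, hr0, rfl, -, -⟩ := hx0
      exact (lt_of_le_of_lt hle (EReal.coe_lt_top r0)).ne
    have hRbot : sInf S ≠ ⊥ := by
      intro hb
      rw [hb] at hR0
      exact absurd hR0 (by simp)
    set t := (sInf S).toReal with ht_def
    have ht : sInf S = (t : EReal) := (EReal.coe_toReal hRtop hRbot).symm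
    rw [hdT, ht, ← EReal.coe_mul]
    refine EReal.le_of_forall_lt_iff_le.mp ?_
    intro z hz
    have hz' : 2 * t < z := by exact_mod_cast hz
    have hlt : sInf S < ((z/2 : ℝ) : EReal) := by
      rw [ht]
      exact_mod_cast (by linarith : t < z/2)
    obtain ⟨x, hxS, hxlt⟩ := sInf_lt_iff.mp hlt
    obtain ⟨r, hr, rfl, hp1, hp2⟩ := hxS
    have hrz : r < z/2 := by exact_mod_cast hxlt
    calc dTmat Vb (mpow ((U.trace)⁻¹ • U) β) ≤ ((2*r : ℝ) : EReal) := main r hr hp1 hp2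
    _ ≤ ((z:ℝ) : EReal) := by exact_mod_cast (by linarith : 2*r ≤ z)

end
end
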